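/- Let w : ℝ → (0,∞) be continuous with 1/w not Lebesgue-integrable on (−∞,0) and not Lebesgue-integrable on (0,∞). Then for every t ∈ ℝ the map T_w(t) given by (T_w(t)x)(ξ) = (w(ξ+μ_w(ξ,t))/w(ξ))·x(ξ+μ_w(ξ,t)) is a well-defined linear map of L²_w(ℝ) into itself and is isometric: ‖T_w(t)x‖_{L²_w(ℝ)} = ‖x‖_{L²_w(ℝ)} for all x ∈ L²_w(ℝ). -/

import Mathlib

open MeasureTheory Filter Set Topology

/-- `p_w(ξ) = ∫₀^ξ w(ζ)⁻¹ dζ`. -/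
noncomputable def pW (w : ℝ → ℝ) (ξ : ℝ) : ℝ := ∫ ζ in (0:ℝ)..ξ, (w ζ)⁻¹

/-- `μ_w(ξ,t) = p_w⁻¹(p_w(ξ) + t) − ξ`. -/
noncomputable def muW (w : ℝ → ℝ) (ξ t : ℝ) : ℝ :=
  Function.invFun (pW w) (pW w ξ + t) - ξ

/-- `(T_w(t)x)(ξ) = (w(ξ+μ_w(ξ,t))/w(ξ)) · x(ξ+μ_w(ξ,t))`. -/
noncomputable def Tw (w : ℝ → ℝ) (t : ℝ) (x : ℝ → ℂ) (ξ : ℝ) : ℂ :=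
  ((w (ξ + muW w ξ t) / w ξ : ℝ) : ℂ) * x (ξ + muW w ξ t)

theorem stmt_10 (w : ℝ → ℝ) (hw_cont : Continuous w) (hw_pos : ∀ ξ, 0 < w ξ)
    (hni_neg : ¬ IntegrableOn (fun ζ => (w ζ)⁻¹) (Set.Iio 0))
    (hni_pos : ¬ IntegrableOn (fun ζ => (w ζ)⁻¹) (Set.Ioi 0)) (t : ℝ) :
    (∀ x y : ℝ → ℂ, ∀ c : ℂ, ∀ ξ : ℝ,
      Tw w t (fun ζ => x ζ + c • y ζ) ξ = Tw w t x ξ + c • Tw w t y ξ) ∧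
    ∀ x : ℝ → ℂ, AEStronglyMeasurable x volume →
      Integrable (fun ξ => w ξ * ‖x ξ‖ ^ 2) →
      AEStronglyMeasurable (Tw w t x) volume ∧
      Integrable (fun ξ => w ξ * ‖Tw w t x ξ‖ ^ 2) ∧
      (∫ ξ, w ξ * ‖Tw w t x ξ‖ ^ 2) = ∫ ξ, w ξ * ‖x ξ‖ ^ 2 := by
  have hw_ne : ∀ ξ, w ξ ≠ 0 := fun ξ => (hw_pos ξ).ne'
  have hinv_cont : Continuous fun ζ : ℝ => (w ζ)⁻¹ := hw_cont.inv₀ hw_ne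
  have hinv_pos : ∀ ξ, (0:ℝ) < (w ξ)⁻¹ := fun ξ => inv_pos.2 (hw_pos ξ)
  -- derivative of pW
  have hP_deriv : ∀ ξ, HasDerivAt (pW w) (w ξ)⁻¹ ξ := fun ξ =>
    intervalIntegral.integral_hasDerivAt_right (hinv_cont.intervalIntegrable _ _)
      (hinv_cont.stronglyMeasurableAtFilter _ _)
      hinv_cont.continuousAt
  have hP_cont : Continuous (pW w) :=
    continuous_iff_continuousAt.2 fun ξ => (hP_deriv ξ).continuousAt
  have hP_mono : StrictMono (pW w) := by
    apply strictMono_of_deriv_pos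
    intro ξ
    rw [(hP_deriv ξ).deriv]
    exact hinv_pos ξ
  -- integrals of ‖w⁻¹‖ over intervals
  have hInt : ∀ a b : ℝ, (∫ ζ in a..b, ‖(w ζ)⁻¹‖) = pW w b - pW w a := by
    intro a b
    have : (∫ ζ in a..b, ‖(w ζ)⁻¹‖) = ∫ ζ in a..b, (w ζ)⁻¹ := by
      apply intervalIntegral.integral_congr
      intro ζ _
      exact Real.norm_of_nonneg (hinv_pos ζ).le
    rw [this, pW, pW, intervalIntegral.integral_interval_sub_left
      (hinv_cont.intervalIntegrable _ _) (hinv_cont.intervalIntegrable _ _)]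
  have hP_top : Tendsto (pW w) atTop atTop := by
    by_contra h
    have hb : BddAbove (Set.range (pW w)) := by
      by_contra hb
      exact h (tendsto_atTop_atTop_of_monotone' hP_mono.monotone hb)
    obtain ⟨M, hM⟩ := hb
    refine hni_pos ?_
    refine integrableOn_Ioi_of_intervalIntegral_norm_bounded (M - pW w 0) 0
      (fun i : ℝ => hinv_cont.integrableOn_Ioc) tendsto_id ?_
    filter_upwards with i
    simp only [id_eq]
    rw [hInt]
    have := hM (Set.mem_range_self i)
    linarith
  have hP_bot : Tendsto (pW w) atBot atBot := by
    by_contra h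
    have hb : BddBelow (Set.range (pW w)) := by
      by_contra hb
      exact h (tendsto_atBot_atBot_of_monotone' hP_mono.monotone hb)
    obtain ⟨m, hm⟩ := hb
    refine hni_neg ?_
    have : IntegrableOn (fun ζ => (w ζ)⁻¹) (Set.Iic 0) volume := by
      refine integrableOn_Iic_of_intervalIntegral_norm_bounded (pW w 0 - m) 0
        (fun i : ℝ => hinv_cont.integrableOn_Ioc) tendsto_id ?_
      filter_upwards with i
      simp only [id_eq]
      rw [hInt]
      have := hm (Set.mem_range_self i)
      linarith
    exact this.mono_set Set.Iio_subset_Iic_self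
  have hP_surj : Function.Surjective (pW w) := hP_cont.surjective hP_top hP_bot
  -- the inverse of pW
  set q : ℝ → ℝ := Function.invFun (pW w) with hq
  have hqP : ∀ ξ, q (pW w ξ) = ξ := fun ξ => Function.leftInverse_invFun hP_mono.injective ξ
  have hPq : ∀ y, pW w (q y) = y := fun y => Function.rightInverse_invFun hP_surj y
  have hq_eq : q = (StrictMono.orderIsoOfSurjective (pW w) hP_mono hP_surj).symm := by
    funext y
    apply hP_mono.injective
    rw [hPq y]
    exact (StrictMono.orderIsoOfSurjective_self_symm_apply (pW w) hP_mono hP_surj y).symm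
  have hq_cont : Continuous q := by
    rw [hq_eq]
    exact (StrictMono.orderIsoOfSurjective (pW w) hP_mono hP_surj).symm.continuous
  have hq_deriv : ∀ y, HasDerivAt q (w (q y)) y := by
    intro y
    have := HasDerivAt.of_local_left_inverse hq_cont.continuousAt
      (hP_deriv (q y)) (hinv_pos (q y)).ne' (Filter.Eventually.of_forall hPq)
    rwa [inv_inv] at this
  -- the translation map φ and its inverse ψ
  set φ : ℝ → ℝ := fun ξ => q (pW w ξ + t) with hφ
  set ψ : ℝ → ℝ := fun ξ => q (pW w ξ - t) with hψ
  have hφψ : ∀ ξ, φ (ψ ξ) = ξ := by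
    intro ξ; simp only [hφ, hψ, hPq]; rw [sub_add_cancel, hqP]
  have hψφ : ∀ ξ, ψ (φ ξ) = ξ := by
    intro ξ; simp only [hφ, hψ, hPq]; rw [add_sub_cancel_right, hqP]
  have hφ_inj : Function.Injective φ := Function.LeftInverse.injective hψφ
  have hφ_surj : Function.Surjective φ := fun ξ => ⟨ψ ξ, hφψ ξ⟩
  have hφ_deriv : ∀ ξ, HasDerivAt φ (w (φ ξ) * (w ξ)⁻¹) ξ := fun ξ =>
    by have h := (hq_deriv (pW w ξ + t)).comp ξ ((hP_deriv ξ).add_const t); exact h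
  have hψ_deriv : ∀ ξ, HasDerivAt ψ (w (ψ ξ) * (w ξ)⁻¹) ξ := fun ξ =>
    by have h := (hq_deriv (pW w ξ - t)).comp ξ ((hP_deriv ξ).sub_const t); exact h
  have hφ_cont : Continuous φ := hq_cont.comp (hP_cont.add continuous_const)
  have hmu : ∀ ξ, ξ + muW w ξ t = φ ξ := by
    intro ξ; simp [muW, hφ, hq]
  have hφ'_pos : ∀ ξ, 0 < w (φ ξ) * (w ξ)⁻¹ := fun ξ =>
    mul_pos (hw_pos _) (hinv_pos ξ)
  refine ⟨?_, ?_⟩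
  · intro x y c ξ
    simp only [Tw, smul_eq_mul]
    ring
  intro x hx hx2
  -- quasi measure preserving of φ
  have hqmp : Measure.QuasiMeasurePreserving φ volume volume := by
    refine ⟨hφ_cont.measurable, ?_⟩
    refine Measure.AbsolutelyContinuous.mk fun s hs h0 => ?_
    rw [Measure.map_apply hφ_cont.measurable hs]
    have hpre : φ ⁻¹' s = ψ '' s := by
      ext ζ
      constructor
      · intro hζ; exact ⟨φ ζ, hζ, hψφ ζ⟩
      · rintro ⟨a, ha, rfl⟩; rwa [Set.mem_preimage, hφψ]
    rw [hpre]
    exact addHaar_image_eq_zero_of_differentiableOn_of_addHaar_eq_zero (μ := volume)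
      (fun ζ _ => (hψ_deriv ζ).differentiableAt.differentiableWithinAt) h0
  have hTw_eq : Tw w t x = fun ξ => ((w (φ ξ) / w ξ : ℝ) : ℂ) * x (φ ξ) := by
    funext ξ; rw [Tw, hmu]
  have hAESM : AEStronglyMeasurable (Tw w t x) volume := by
    rw [hTw_eq]
    exact (Complex.continuous_ofReal.comp
      ((hw_cont.comp hφ_cont).div hw_cont hw_ne)).aestronglyMeasurable.mul
      (hx.comp_quasiMeasurePreserving hqmp)
  -- pointwise identity for the change of variables
  have hkey : ∀ ξ, w ξ * ‖Tw w t x ξ‖ ^ 2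
      = |w (φ ξ) * (w ξ)⁻¹| • (w (φ ξ) * ‖x (φ ξ)‖ ^ 2) := by
    intro ξ
    have h1 : ‖Tw w t x ξ‖ = (w (φ ξ) / w ξ) * ‖x (φ ξ)‖ := by
      rw [Tw, hmu, norm_mul, Complex.norm_real, Real.norm_eq_abs,
        abs_of_pos (div_pos (hw_pos _) (hw_pos _))]
    rw [h1, abs_of_pos (hφ'_pos ξ), smul_eq_mul]
    field_simp [hw_ne ξ]
  have hderivWithin : ∀ ξ ∈ (Set.univ : Set ℝ),
      HasDerivWithinAt φ (w (φ ξ) * (w ξ)⁻¹) Set.univ ξ :=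
    fun ξ _ => (hφ_deriv ξ).hasDerivWithinAt
  have himage : φ '' Set.univ = Set.univ := by
    rw [Set.image_univ]; exact hφ_surj.range_eq
  have hkeyfun := funext hkey
  refine ⟨hAESM, ?_, ?_⟩
  · have := (integrableOn_image_iff_integrableOn_abs_deriv_smul MeasurableSet.univ
      hderivWithin (Function.Injective.injOn hφ_inj)
      (fun ξ => w ξ * ‖x ξ‖ ^ 2)).1 (by rwa [himage, integrableOn_univ])
    rw [integrableOn_univ] at this
    rw [hkeyfun]
    exact this
  · have := integral_image_eq_integral_abs_deriv_smul MeasurableSet.univ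
      hderivWithin (Function.Injective.injOn hφ_inj)
      (fun ξ => w ξ * ‖x ξ‖ ^ 2)
    rw [himage] at this
    simp only [Measure.restrict_univ] at this
    rw [hkeyfun]
    exact this.symm
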